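/- Let U be an unrooted binary phylogenetic network on X, and let G be a subgraph of U isomorphic to the reticulation gadget (with ℓ and ℓ' being leaves of U). Suppose U has a tree-child orientation N such that the root of N does not subdivide an edge of G. Then (w,r), (w',r), (r,t), and (s,u) are arcs in N. -/

import Mathlib

/-- A graph with an explicit vertex set inside an ambient type `V`. -/
structure Net (V : Type) where
  verts : Set V
  graph : SimpleGraph V
  support : ∀ ⦃a b : V⦄, graph.Adj a b → a ∈ verts ∧ b ∈ verts

namespace Net

variable {V : Type}

/-- The degree of a vertex. -/
noncomputable def deg (N : Net V) (v : V) : ℕ := (N.graph.neighborSet v).ncard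

/-- `N` is connected (as a graph on its vertex set `N.verts`). -/
def ConnectedOn (N : Net V) : Prop :=
  N.verts.Nonempty ∧ ∀ a ∈ N.verts, ∀ b ∈ N.verts, N.graph.Reachable a b

/-- The set of leaves (degree-1 vertices). -/
def leaves (N : Net V) : Set V := {v | v ∈ N.verts ∧ N.deg v = 1}

/-- `N` is an unrooted binary phylogenetic network on the (label) set `X`:
it is simple (automatic for `SimpleGraph`), connected, every vertex has degree 1 or 3,
and the degree-1 vertices are exactly the elements of `X` (we identify each leaf with
its label). -/
def IsUBPN (N : Net V) (X : Set V) : Prop :=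
  N.ConnectedOn ∧ (∀ v ∈ N.verts, N.deg v = 1 ∨ N.deg v = 3) ∧ N.leaves = X

/-- Deleting a set of edges. -/
def deleteEdges (N : Net V) (D : Set (Sym2 V)) : Net V where
  verts := N.verts
  graph := N.graph.deleteEdges D
  support := fun _ _ h => N.support ((SimpleGraph.deleteEdges_adj.mp h).1)

/-- A cut-edge: an edge whose deletion disconnects the network. -/
def IsCutEdge (N : Net V) (e : Sym2 V) : Prop :=
  e ∈ N.graph.edgeSet ∧ ¬ (N.deleteEdges {e}).ConnectedOn

/-- `N` is `q`-cuttable: every cycle contains a path of at least `q` vertices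
each of which is incident to a cut-edge. -/
def QCuttable (N : Net V) (q : ℕ) : Prop :=
  ∀ ⦃r : V⦄ (C : N.graph.Walk r r), C.IsCycle →
    ∃ (x y : V) (P : N.graph.Walk x y), P.IsPath ∧ q ≤ P.support.length ∧
      (∀ v ∈ P.support, v ∈ C.support) ∧ (∀ e ∈ P.edges, e ∈ C.edges) ∧
      ∀ v ∈ P.support, ∃ e, N.IsCutEdge e ∧ v ∈ e

end Net

/-- In-degree of a vertex in the digraph with arc relation `A`. -/
noncomputable def inDeg {W : Type} (A : W → W → Prop) (v : W) : ℕ := {u | A u v}.ncard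

/-- Out-degree of a vertex in the digraph with arc relation `A`. -/
noncomputable def outDeg {W : Type} (A : W → W → Prop) (v : W) : ℕ := {u | A v u}.ncard

/-- `v` is a reticulation: in-degree 2. -/
def IsRet {W : Type} (A : W → W → Prop) (v : W) : Prop := inDeg A v = 2

/-- `v` is a tree vertex: in-degree 1 and out-degree 2. -/
def IsTreeVertex {W : Type} (A : W → W → Prop) (v : W) : Prop :=
  inDeg A v = 1 ∧ outDeg A v = 2

/-- `v` is a leaf: in-degree 1 and out-degree 0. -/
def IsDLeaf {W : Type} (A : W → W → Prop) (v : W) : Prop :=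
  inDeg A v = 1 ∧ outDeg A v = 0

/-- The arc relation `A`, with vertex set `S` and root `ρ`, forms a rooted binary
phylogenetic network. -/
def IsRBPN {W : Type} (A : W → W → Prop) (S : Set W) (ρ : W) : Prop :=
  (∀ ⦃a b : W⦄, A a b → a ∈ S ∧ b ∈ S) ∧
  (∀ v : W, ¬ Relation.TransGen A v v) ∧
  ρ ∈ S ∧ inDeg A ρ = 0 ∧ outDeg A ρ = 2 ∧
  (∀ v ∈ S, v ≠ ρ → IsDLeaf A v ∨ IsTreeVertex A v ∨ IsRet A v) ∧
  (∀ v ∈ S, inDeg A v = 0 → v = ρ)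

/-- Tree-child: every non-leaf vertex has a child that is not a reticulation. -/
def TreeChild {W : Type} (A : W → W → Prop) (S : Set W) : Prop :=
  ∀ v ∈ S, ¬ IsDLeaf A v → ∃ w, A v w ∧ ¬ IsRet A w

/-- Adjacency in the graph obtained from `U` by subdividing the edge `{a, b}` with a new
vertex `none : Option V`. -/
def SubdivAdj {V : Type} (U : Net V) (a b : V) (p q : Option V) : Prop :=
  (∃ x y : V, p = some x ∧ q = some y ∧ U.graph.Adj x y ∧ s(x, y) ≠ s(a, b)) ∨
  (p = none ∧ (q = some a ∨ q = some b)) ∨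
  (q = none ∧ (p = some a ∨ p = some b))

/-- The vertex set of an orientation of `U`: the vertices of `U` together with the new
root vertex `none`. -/
def OVerts {V : Type} (U : Net V) : Set (Option V) := insert none (some '' U.verts)

/-- The arc relation `A` on `Option V` is an orientation of `U` obtained by subdividing the
edge `{a, b}` of `U` with the new root vertex `none` and directing every edge of the
resulting graph. -/
def IsOrientationAt {V : Type} (U : Net V) (A : Option V → Option V → Prop) (a b : V) :
    Prop :=
  U.graph.Adj a b ∧ (∀ p q, ¬ (A p q ∧ A q p)) ∧
  (∀ p q, (A p q ∨ A q p) ↔ SubdivAdj U a b p q)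

/-- `A` is a tree-child orientation of `U` subdividing the edge `{a, b}`: it is an
orientation of `U` that is a rooted binary phylogenetic network with root `none` and is
tree-child. -/
def IsTreeChildOrientationAt {V : Type} (U : Net V) (A : Option V → Option V → Prop)
    (a b : V) : Prop :=
  IsOrientationAt U A a b ∧ IsRBPN A (OVerts U) none ∧ TreeChild A (OVerts U)

open Net

section GadgetAux

variable {V : Type}

lemma aux_nbhd3 [Fintype V] (U : Net V) {X : Set V} (hU : U.IsUBPN X) {x n1 n2 n3 : V}
    (h1 : U.graph.Adj x n1) (h2 : U.graph.Adj x n2) (h3 : U.graph.Adj x n3)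
    (d12 : n1 ≠ n2) (d13 : n1 ≠ n3) (d23 : n2 ≠ n3) :
    U.graph.neighborSet x = {n1, n2, n3} := by
  have hx : x ∈ U.verts := (U.support h1).1
  have hsub : ({n1, n2, n3} : Set V) ⊆ U.graph.neighborSet x := by
    rintro p (rfl | rfl | rfl) <;> assumption
  have hc3 : ({n1, n2, n3} : Set V).ncard = 3 := by
    rw [Set.ncard_insert_of_notMem (by simp [d12, d13]) (Set.toFinite _),
      Set.ncard_pair d23]
  have hle : 3 ≤ U.deg x := by
    rw [← hc3]; exact Set.ncard_le_ncard hsub (Set.toFinite _)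
  have hdeg : U.deg x = 3 := by rcases hU.2.1 x hx with h | h <;> omega
  exact (Set.eq_of_subset_of_ncard_le hsub (by rw [hc3]; exact le_of_eq hdeg)
    (Set.toFinite _)).symm

lemma aux_nbhd1 [Fintype V] (U : Net V) {X : Set V} (hU : U.IsUBPN X) {x n1 : V}
    (h1 : U.graph.Adj x n1) (hxX : x ∈ X) : U.graph.neighborSet x = {n1} := by
  have hdeg : U.deg x = 1 := by rw [← hU.2.2] at hxX; exact hxX.2
  have hsub : ({n1} : Set V) ⊆ U.graph.neighborSet x := by rintro p rfl; exact h1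
  exact (Set.eq_of_subset_of_ncard_le hsub
    (by rw [Set.ncard_singleton]; exact le_of_eq hdeg) (Set.toFinite _)).symm

lemma aux_subdiv_nbr (U : Net V) {a b x : V} {S3 : Set V} {p : Option V}
    (hN : U.graph.neighborSet x = S3) (hab : U.graph.Adj a b)
    (hmem : ∀ c ∈ S3, s(x, c) = s(a, b) → False)
    (h : SubdivAdj U a b p (some x) ∨ SubdivAdj U a b (some x) p) :
    ∃ c ∈ S3, p = some c := by
  have hcase : ∀ _ : some x = some a ∨ some x = some b, False := by
    rintro (h' | h')
    · obtain rfl : x = a := Option.some.inj h'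
      exact hmem b (hN ▸ hab) rfl
    · obtain rfl : x = b := Option.some.inj h'
      exact hmem a (hN ▸ hab.symm) Sym2.eq_swap
  rcases h with (⟨y, z, hp, hq, hadj, _⟩ | ⟨_, hq⟩ | ⟨hq, _⟩) |
      (⟨y, z, hq, hp, hadj, _⟩ | ⟨hq, _⟩ | ⟨_, hq⟩)
  · obtain rfl : x = z := Option.some.inj hq
    exact ⟨y, hN ▸ hadj.symm, hp⟩
  · exact absurd (hcase hq) not_false
  · exact nomatch hq
  · obtain rfl : x = y := Option.some.inj hq
    exact ⟨z, hN ▸ hadj, hp⟩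
  · exact nomatch hq
  · exact absurd (hcase hq) not_false

lemma aux_setOf_eq_pair {W : Type} {P : W → Prop} {n1 n2 n3 : W}
    (hsub : ∀ p, P p → p = n1 ∨ p = n2 ∨ p = n3)
    (h1 : P n1) (h2 : P n2) (h3 : ¬ P n3) (d12 : n1 ≠ n2) :
    {p | P p}.ncard = 2 := by
  have hs : {p | P p} = {n1, n2} := by
    ext p
    constructor
    · intro hp
      rcases hsub p hp with rfl | rfl | rfl
      exacts [Or.inl rfl, Or.inr rfl, absurd hp h3]
    · rintro (rfl | rfl)
      exacts [h1, h2]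
  rw [hs, Set.ncard_pair d12]

lemma aux_three_le {W : Type} {P : W → Prop} {n1 n2 n3 : W}
    (hsub : ∀ p, P p → p = n1 ∨ p = n2 ∨ p = n3)
    (h1 : P n1) (h2 : P n2) (h3 : P n3)
    (d12 : n1 ≠ n2) (d13 : n1 ≠ n3) (d23 : n2 ≠ n3) :
    3 ≤ {p | P p}.ncard := by
  have hfin : {p | P p}.Finite := by
    apply (Set.toFinite ({n1, n2, n3} : Set W)).subset
    intro p hp
    rcases hsub p hp with rfl | rfl | rfl <;> simp
  have hsub' : ({n1, n2, n3} : Set W) ⊆ {p | P p} := by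
    rintro p (rfl | rfl | rfl) <;> assumption
  have hc3 : ({n1, n2, n3} : Set W).ncard = 3 := by
    rw [Set.ncard_insert_of_notMem (by simp [d12, d13]) (Set.toFinite _),
      Set.ncard_pair d23]
  rw [← hc3]
  exact Set.ncard_le_ncard hsub' hfin

lemma aux_exists_of_ncard_ne_zero {W : Type} {P : W → Prop}
    (h : {p | P p}.ncard ≠ 0) : ∃ p, P p := by
  by_contra hc
  push_neg at hc
  apply h
  have hs : {p | P p} = ∅ := Set.eq_empty_iff_forall_notMem.mpr hc
  rw [hs]
  exact Set.ncard_empty _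

set_option maxHeartbeats 2000000 in
lemma gadget_key (su uv uvp vvp vw vpwp wr wpr rt : Prop)
    (hu1 : ¬(su ∧ ¬uv ∧ ¬uvp)) (hu2 : su ∨ ¬uv ∨ ¬uvp)
    (hv1 : ¬(uv ∧ ¬vvp ∧ ¬vw)) (hv2 : uv ∨ ¬vvp ∨ ¬vw)
    (hvp1 : ¬(uvp ∧ vvp ∧ ¬vpwp)) (hvp2 : uvp ∨ vvp ∨ ¬vpwp)
    (hw2 : vw ∨ ¬wr) (hwp2 : vpwp ∨ ¬wpr)
    (hr1 : ¬(wr ∧ wpr ∧ ¬rt)) (hr2 : wr ∨ wpr ∨ ¬rt)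
    (tcv : (¬uv ∧ ¬((su ∧ ¬uv ∧ uvp) ∨ (su ∧ uv ∧ ¬uvp) ∨ (¬su ∧ ¬uv ∧ ¬uvp)))
         ∨ (vvp ∧ ¬((uvp ∧ vvp ∧ vpwp) ∨ (uvp ∧ ¬vvp ∧ ¬vpwp) ∨ (¬uvp ∧ vvp ∧ ¬vpwp)))
         ∨ (vw ∧ ¬(vw ∧ ¬wr)))
    (tcvp : (¬uvp ∧ ¬((su ∧ ¬uv ∧ uvp) ∨ (su ∧ uv ∧ ¬uvp) ∨ (¬su ∧ ¬uv ∧ ¬uvp)))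
         ∨ (¬vvp ∧ ¬((uv ∧ ¬vvp ∧ vw) ∨ (uv ∧ vvp ∧ ¬vw) ∨ (¬uv ∧ ¬vvp ∧ ¬vw)))
         ∨ (vpwp ∧ ¬(vpwp ∧ ¬wpr)))
    (tri1 : ¬(uv ∧ vvp ∧ ¬uvp)) (tri2 : ¬(¬uv ∧ ¬vvp ∧ uvp))
    (pen1 : ¬(vw ∧ wr ∧ ¬wpr ∧ ¬vpwp ∧ ¬vvp))
    (pen2 : ¬(¬vw ∧ ¬wr ∧ wpr ∧ vpwp ∧ vvp)) :
    wr ∧ wpr ∧ rt ∧ su := by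
  by_cases hsu : su <;> by_cases huv : uv <;> by_cases huvp : uvp <;>
    by_cases hvvp : vvp <;> by_cases hvw : vw <;> by_cases hvpwp : vpwp <;>
    by_cases hwr : wr <;> by_cases hwpr : wpr <;> by_cases hrt : rt <;> simp_all

end GadgetAux


/-- Let `U` be an unrooted binary phylogenetic network on `X` and let `G`
be a subgraph of `U` isomorphic to the reticulation gadget, with vertices
`s, t, u, v, v', w, w', r, ℓ, ℓ'` and edges `{s,u}, {u,v}, {u,v'}, {v,v'}, {v,w}, {v',w'},
{w,r}, {w',r}, {w,ℓ}, {w',ℓ'}, {r,t}`, where `ℓ` and `ℓ'` are leaves of `U`. Suppose `U`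
has a tree-child orientation `A` (with root subdividing the edge `{a, b}` of `U`) whose
root does not subdivide an edge of the gadget. Then `(w,r)`, `(w',r)`, `(r,t)`, and
`(s,u)` are arcs in the orientation. -/
theorem reticulation_gadget_orientation {V : Type} [Fintype V]
    (U : Net V) (X : Set V) (hU : U.IsUBPN X)
    (s t u v v' w w' r ℓ ℓ' : V)
    (hnd : ([s, t, u, v, v', w, w', r, ℓ, ℓ'] : List V).Nodup)
    (e1 : U.graph.Adj s u) (e2 : U.graph.Adj u v) (e3 : U.graph.Adj u v')
    (e4 : U.graph.Adj v v') (e5 : U.graph.Adj v w) (e6 : U.graph.Adj v' w')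
    (e7 : U.graph.Adj w r) (e8 : U.graph.Adj w' r)
    (e9 : U.graph.Adj w ℓ) (e10 : U.graph.Adj w' ℓ') (e11 : U.graph.Adj r t)
    (hℓ : ℓ ∈ X) (hℓ' : ℓ' ∈ X)
    (a b : V) (A : Option V → Option V → Prop)
    (hor : IsTreeChildOrientationAt U A a b)
    (hroot : s(a, b) ∉ ({s(s, u), s(u, v), s(u, v'), s(v, v'), s(v, w), s(v', w'),
      s(w, r), s(w', r), s(w, ℓ), s(w', ℓ'), s(r, t)} : Set (Sym2 V))) :
    A (some w) (some r) ∧ A (some w') (some r) ∧ A (some r) (some t) ∧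
      A (some s) (some u) := by
  classical
  obtain ⟨⟨hadjab, hnb, hiff⟩, hrbpn, htc⟩ := hor
  obtain ⟨-, hacyc, -, -, -, hclass, -⟩ := hrbpn
  simp only [List.nodup_cons, List.mem_cons, List.not_mem_nil, or_false, not_or,
    List.nodup_nil, and_true] at hnd
  obtain ⟨⟨nst, nsu, nsv, nsvp, nsw, nswp, nsr, nsl, nslp⟩,
    ⟨ntu, ntv, ntvp, ntw, ntwp, ntr, ntl, ntlp⟩,
    ⟨nuv, nuvp, nuw, nuwp, nur, nul, nulp⟩,
    ⟨nvvp, nvw, nvwp, nvr, nvl, nvlp⟩,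
    ⟨nvpw, nvpwp, nvpr, nvpl, nvplp⟩,
    ⟨nwwp, nwr, nwl, nwlp⟩, ⟨nwpr, nwpl, nwplp⟩, ⟨nrl, nrlp⟩, nllp⟩ := hnd
  have ne_e : ∀ e ∈ ({s(s, u), s(u, v), s(u, v'), s(v, v'), s(v, w), s(v', w'),
      s(w, r), s(w', r), s(w, ℓ), s(w', ℓ'), s(r, t)} : Set (Sym2 V)), e ≠ s(a, b) :=
    fun e he h => hroot (h ▸ he)
  have ne1 : s(s, u) ≠ s(a, b) := ne_e _ (by simp)
  have ne2 : s(u, v) ≠ s(a, b) := ne_e _ (by simp)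
  have ne3 : s(u, v') ≠ s(a, b) := ne_e _ (by simp)
  have ne4 : s(v, v') ≠ s(a, b) := ne_e _ (by simp)
  have ne5 : s(v, w) ≠ s(a, b) := ne_e _ (by simp)
  have ne6 : s(v', w') ≠ s(a, b) := ne_e _ (by simp)
  have ne7 : s(w, r) ≠ s(a, b) := ne_e _ (by simp)
  have ne8 : s(w', r) ≠ s(a, b) := ne_e _ (by simp)
  have ne9 : s(w, ℓ) ≠ s(a, b) := ne_e _ (by simp)
  have ne10 : s(w', ℓ') ≠ s(a, b) := ne_e _ (by simp)
  have ne11 : s(r, t) ≠ s(a, b) := ne_e _ (by simp)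
  have dich : ∀ {x y : V}, U.graph.Adj x y → s(x, y) ≠ s(a, b) →
      (A (some x) (some y) ∨ A (some y) (some x)) :=
    fun h hne => (hiff _ _).mpr (Or.inl ⟨_, _, rfl, rfl, h, hne⟩)
  have Dsu := dich e1 ne1
  have Duv := dich e2 ne2
  have Duvp := dich e3 ne3
  have Dvvp := dich e4 ne4
  have Dvw := dich e5 ne5
  have Dvpwp := dich e6 ne6
  have Dwr := dich e7 ne7
  have Dwpr := dich e8 ne8
  have Dwl := dich e9 ne9
  have Dwplp := dich e10 ne10
  have Drt := dich e11 ne11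
  have mkIff : ∀ {p q : Option V}, (A p q ∨ A q p) → (A q p ↔ ¬ A p q) :=
    fun D => ⟨fun h h' => hnb _ _ ⟨h', h⟩, fun h => D.resolve_left h⟩
  have Rsu := mkIff Dsu
  have Ruv := mkIff Duv
  have Ruvp := mkIff Duvp
  have Rvvp := mkIff Dvvp
  have Rvw := mkIff Dvw
  have Rvpwp := mkIff Dvpwp
  have Rwr := mkIff Dwr
  have Rwpr := mkIff Dwpr
  have Rwl := mkIff Dwl
  have Rwplp := mkIff Dwplp
  have Rrt := mkIff Drt
  have hsV : s ∈ U.verts := (U.support e1).1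
  have huV : u ∈ U.verts := (U.support e1).2
  have hvV : v ∈ U.verts := (U.support e2).2
  have hvpV : v' ∈ U.verts := (U.support e3).2
  have hwV : w ∈ U.verts := (U.support e5).2
  have hwpV : w' ∈ U.verts := (U.support e6).2
  have hrV : r ∈ U.verts := (U.support e7).2
  have hlV : ℓ ∈ U.verts := (U.support e9).2
  have hlpV : ℓ' ∈ U.verts := (U.support e10).2
  have Nu : U.graph.neighborSet u = {s, v, v'} := aux_nbhd3 U hU e1.symm e2 e3 nsv nsvp nvvp
  have Nv : U.graph.neighborSet v = {u, v', w} := aux_nbhd3 U hU e2.symm e4 e5 nuvp nuw nvpw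
  have Nvp : U.graph.neighborSet v' = {u, v, w'} :=
    aux_nbhd3 U hU e3.symm e4.symm e6 nuv nuwp nvwp
  have Nw : U.graph.neighborSet w = {v, r, ℓ} := aux_nbhd3 U hU e5.symm e7 e9 nvr nvl nrl
  have Nwp : U.graph.neighborSet w' = {v', r, ℓ'} :=
    aux_nbhd3 U hU e6.symm e8 e10 nvpr nvplp nrlp
  have Nr : U.graph.neighborSet r = {w, w', t} :=
    aux_nbhd3 U hU e7.symm e8.symm e11 nwwp (Ne.symm ntw) (Ne.symm ntwp)
  have Nl : U.graph.neighborSet ℓ = {w} := aux_nbhd1 U hU e9.symm hℓ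
  have Nlp : U.graph.neighborSet ℓ' = {w'} := aux_nbhd1 U hU e10.symm hℓ'
  have Mu : ∀ c ∈ ({s, v, v'} : Set V), s(u, c) = s(a, b) → False := by
    rintro c (rfl | rfl | rfl) h
    exacts [ne1 (Sym2.eq_swap.trans h), ne2 h, ne3 h]
  have Mv : ∀ c ∈ ({u, v', w} : Set V), s(v, c) = s(a, b) → False := by
    rintro c (rfl | rfl | rfl) h
    exacts [ne2 (Sym2.eq_swap.trans h), ne4 h, ne5 h]
  have Mvp : ∀ c ∈ ({u, v, w'} : Set V), s(v', c) = s(a, b) → False := by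
    rintro c (rfl | rfl | rfl) h
    exacts [ne3 (Sym2.eq_swap.trans h), ne4 (Sym2.eq_swap.trans h), ne6 h]
  have Mw : ∀ c ∈ ({v, r, ℓ} : Set V), s(w, c) = s(a, b) → False := by
    rintro c (rfl | rfl | rfl) h
    exacts [ne5 (Sym2.eq_swap.trans h), ne7 h, ne9 h]
  have Mwp : ∀ c ∈ ({v', r, ℓ'} : Set V), s(w', c) = s(a, b) → False := by
    rintro c (rfl | rfl | rfl) h
    exacts [ne6 (Sym2.eq_swap.trans h), ne8 h, ne10 h]
  have Mr : ∀ c ∈ ({w, w', t} : Set V), s(r, c) = s(a, b) → False := by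
    rintro c (rfl | rfl | rfl) h
    exacts [ne7 (Sym2.eq_swap.trans h), ne8 (Sym2.eq_swap.trans h), ne11 h]
  have Ml : ∀ c ∈ ({w} : Set V), s(ℓ, c) = s(a, b) → False := by
    rintro c rfl h
    exact ne9 (Sym2.eq_swap.trans h)
  have Mlp : ∀ c ∈ ({w'} : Set V), s(ℓ', c) = s(a, b) → False := by
    rintro c rfl h
    exact ne10 (Sym2.eq_swap.trans h)
  have inSubU : ∀ p, A p (some u) → p = some s ∨ p = some v ∨ p = some v' := by
    intro p hp
    obtain ⟨c, hc, rfl⟩ :=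
      aux_subdiv_nbr U Nu hadjab Mu (Or.inl ((hiff p (some u)).mp (Or.inl hp)))
    rcases hc with rfl | rfl | rfl
    exacts [Or.inl rfl, Or.inr (Or.inl rfl), Or.inr (Or.inr rfl)]
  have inSubV : ∀ p, A p (some v) → p = some u ∨ p = some v' ∨ p = some w := by
    intro p hp
    obtain ⟨c, hc, rfl⟩ :=
      aux_subdiv_nbr U Nv hadjab Mv (Or.inl ((hiff p (some v)).mp (Or.inl hp)))
    rcases hc with rfl | rfl | rfl
    exacts [Or.inl rfl, Or.inr (Or.inl rfl), Or.inr (Or.inr rfl)]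
  have inSubVp : ∀ p, A p (some v') → p = some u ∨ p = some v ∨ p = some w' := by
    intro p hp
    obtain ⟨c, hc, rfl⟩ :=
      aux_subdiv_nbr U Nvp hadjab Mvp (Or.inl ((hiff p (some v')).mp (Or.inl hp)))
    rcases hc with rfl | rfl | rfl
    exacts [Or.inl rfl, Or.inr (Or.inl rfl), Or.inr (Or.inr rfl)]
  have inSubW : ∀ p, A p (some w) → p = some v ∨ p = some r ∨ p = some ℓ := by
    intro p hp
    obtain ⟨c, hc, rfl⟩ :=
      aux_subdiv_nbr U Nw hadjab Mw (Or.inl ((hiff p (some w)).mp (Or.inl hp)))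
    rcases hc with rfl | rfl | rfl
    exacts [Or.inl rfl, Or.inr (Or.inl rfl), Or.inr (Or.inr rfl)]
  have inSubWp : ∀ p, A p (some w') → p = some v' ∨ p = some r ∨ p = some ℓ' := by
    intro p hp
    obtain ⟨c, hc, rfl⟩ :=
      aux_subdiv_nbr U Nwp hadjab Mwp (Or.inl ((hiff p (some w')).mp (Or.inl hp)))
    rcases hc with rfl | rfl | rfl
    exacts [Or.inl rfl, Or.inr (Or.inl rfl), Or.inr (Or.inr rfl)]
  have inSubR : ∀ p, A p (some r) → p = some w ∨ p = some w' ∨ p = some t := by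
    intro p hp
    obtain ⟨c, hc, rfl⟩ :=
      aux_subdiv_nbr U Nr hadjab Mr (Or.inl ((hiff p (some r)).mp (Or.inl hp)))
    rcases hc with rfl | rfl | rfl
    exacts [Or.inl rfl, Or.inr (Or.inl rfl), Or.inr (Or.inr rfl)]
  have inSubL : ∀ p, A p (some ℓ) → p = some w := by
    intro p hp
    obtain ⟨c, hc, rfl⟩ :=
      aux_subdiv_nbr U Nl hadjab Ml (Or.inl ((hiff p (some ℓ)).mp (Or.inl hp)))
    rcases hc with rfl
    rfl
  have inSubLp : ∀ p, A p (some ℓ') → p = some w' := by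
    intro p hp
    obtain ⟨c, hc, rfl⟩ :=
      aux_subdiv_nbr U Nlp hadjab Mlp (Or.inl ((hiff p (some ℓ')).mp (Or.inl hp)))
    rcases hc with rfl
    rfl
  have outSubV : ∀ p, A (some v) p → p = some u ∨ p = some v' ∨ p = some w := by
    intro p hp
    obtain ⟨c, hc, rfl⟩ :=
      aux_subdiv_nbr U Nv hadjab Mv (Or.inr ((hiff (some v) p).mp (Or.inl hp)))
    rcases hc with rfl | rfl | rfl
    exacts [Or.inl rfl, Or.inr (Or.inl rfl), Or.inr (Or.inr rfl)]
  have outSubVp : ∀ p, A (some v') p → p = some u ∨ p = some v ∨ p = some w' := by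
    intro p hp
    obtain ⟨c, hc, rfl⟩ :=
      aux_subdiv_nbr U Nvp hadjab Mvp (Or.inr ((hiff (some v') p).mp (Or.inl hp)))
    rcases hc with rfl | rfl | rfl
    exacts [Or.inl rfl, Or.inr (Or.inl rfl), Or.inr (Or.inr rfl)]
  have memO : ∀ {x : V}, x ∈ U.verts → some x ∈ OVerts U :=
    fun hx => Set.mem_insert_iff.mpr (Or.inr ⟨_, hx, rfl⟩)
  have class2 : ∀ x : V, x ∈ U.verts → inDeg A (some x) = 1 ∨ inDeg A (some x) = 2 := by
    intro x hx
    rcases hclass (some x) (memO hx) (Option.some_ne_none x) with h | h | h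
    exacts [Or.inl h.1, Or.inl h.1, Or.inr h]
  have exIn : ∀ x : V, x ∈ U.verts → ∃ p, A p (some x) := by
    intro x hx
    have hne0 : inDeg A (some x) ≠ 0 := by rcases class2 x hx with h | h <;> omega
    exact aux_exists_of_ncard_ne_zero hne0
  have sne : ∀ {x y : V}, x ≠ y → (some x : Option V) ≠ some y :=
    fun h h' => h (Option.some.inj h')
  -- leaf arcs
  have hwl : A (some w) (some ℓ) := by
    obtain ⟨p, hp⟩ := exIn ℓ hlV
    have hpe := inSubL p hp
    rwa [hpe] at hp
  have hnlw : ¬ A (some ℓ) (some w) := fun h => Rwl.mp h hwl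
  have hwplp : A (some w') (some ℓ') := by
    obtain ⟨p, hp⟩ := exIn ℓ' hlpV
    have hpe := inSubLp p hp
    rwa [hpe] at hp
  have hnlpwp : ¬ A (some ℓ') (some w') := fun h => Rwplp.mp h hwplp
  -- degree constraints
  have hu1 : ¬(A (some s) (some u) ∧ ¬A (some u) (some v) ∧ ¬A (some u) (some v')) := by
    rintro ⟨h1, h2, h3⟩
    have h3le : 3 ≤ inDeg A (some u) :=
      aux_three_le inSubU h1 (Ruv.mpr h2) (Ruvp.mpr h3) (sne nsv) (sne nsvp) (sne nvvp)
    rcases class2 u huV with h | h <;> omega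
  have hu2 : A (some s) (some u) ∨ ¬A (some u) (some v) ∨ ¬A (some u) (some v') := by
    obtain ⟨p, hp⟩ := exIn u huV
    rcases inSubU p hp with rfl | rfl | rfl
    exacts [Or.inl hp, Or.inr (Or.inl (Ruv.mp hp)), Or.inr (Or.inr (Ruvp.mp hp))]
  have hv1 : ¬(A (some u) (some v) ∧ ¬A (some v) (some v') ∧ ¬A (some v) (some w)) := by
    rintro ⟨h1, h2, h3⟩
    have h3le : 3 ≤ inDeg A (some v) :=
      aux_three_le inSubV h1 (Rvvp.mpr h2) (Rvw.mpr h3) (sne nuvp) (sne nuw) (sne nvpw)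
    rcases class2 v hvV with h | h <;> omega
  have hv2 : A (some u) (some v) ∨ ¬A (some v) (some v') ∨ ¬A (some v) (some w) := by
    obtain ⟨p, hp⟩ := exIn v hvV
    rcases inSubV p hp with rfl | rfl | rfl
    exacts [Or.inl hp, Or.inr (Or.inl (Rvvp.mp hp)), Or.inr (Or.inr (Rvw.mp hp))]
  have hvp1 : ¬(A (some u) (some v') ∧ A (some v) (some v') ∧ ¬A (some v') (some w')) := by
    rintro ⟨h1, h2, h3⟩
    have h3le : 3 ≤ inDeg A (some v') :=
      aux_three_le inSubVp h1 h2 (Rvpwp.mpr h3) (sne nuv) (sne nuwp) (sne nvwp)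
    rcases class2 v' hvpV with h | h <;> omega
  have hvp2 : A (some u) (some v') ∨ A (some v) (some v') ∨ ¬A (some v') (some w') := by
    obtain ⟨p, hp⟩ := exIn v' hvpV
    rcases inSubVp p hp with rfl | rfl | rfl
    exacts [Or.inl hp, Or.inr (Or.inl hp), Or.inr (Or.inr (Rvpwp.mp hp))]
  have hw2 : A (some v) (some w) ∨ ¬A (some w) (some r) := by
    obtain ⟨p, hp⟩ := exIn w hwV
    rcases inSubW p hp with rfl | rfl | rfl
    exacts [Or.inl hp, Or.inr (Rwr.mp hp), absurd hp hnlw]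
  have hwp2 : A (some v') (some w') ∨ ¬A (some w') (some r) := by
    obtain ⟨p, hp⟩ := exIn w' hwpV
    rcases inSubWp p hp with rfl | rfl | rfl
    exacts [Or.inl hp, Or.inr (Rwpr.mp hp), absurd hp hnlpwp]
  have hr1 : ¬(A (some w) (some r) ∧ A (some w') (some r) ∧ ¬A (some r) (some t)) := by
    rintro ⟨h1, h2, h3⟩
    have h3le : 3 ≤ inDeg A (some r) :=
      aux_three_le inSubR h1 h2 (Rrt.mpr h3) (sne nwwp) (sne (Ne.symm ntw)) (sne (Ne.symm ntwp))
    rcases class2 r hrV with h | h <;> omega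
  have hr2 : A (some w) (some r) ∨ A (some w') (some r) ∨ ¬A (some r) (some t) := by
    obtain ⟨p, hp⟩ := exIn r hrV
    rcases inSubR p hp with rfl | rfl | rfl
    exacts [Or.inl hp, Or.inr (Or.inl hp), Or.inr (Or.inr (Rrt.mp hp))]
  -- tree-child at v
  have hnLv : ¬ IsDLeaf A (some v) := by
    rintro ⟨-, h0⟩
    have hvout : ∀ q, ¬ A (some v) q := by
      intro q hq
      have hemp : {q | A (some v) q} = ∅ := (Set.ncard_eq_zero (Set.toFinite _)).mp h0
      exact absurd (show q ∈ {q | A (some v) q} from hq)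
        (by rw [hemp]; exact Set.notMem_empty q)
    have h1 : A (some u) (some v) := Duv.resolve_right (hvout _)
    have h2 : A (some v') (some v) := Dvvp.resolve_left (hvout _)
    have h3 : A (some w) (some v) := Dvw.resolve_left (hvout _)
    have h3le : 3 ≤ inDeg A (some v) :=
      aux_three_le inSubV h1 h2 h3 (sne nuvp) (sne nuw) (sne nvpw)
    rcases class2 v hvV with h | h <;> omega
  have hnLvp : ¬ IsDLeaf A (some v') := by
    rintro ⟨-, h0⟩
    have hvout : ∀ q, ¬ A (some v') q := by
      intro q hq
      have hemp : {q | A (some v') q} = ∅ := (Set.ncard_eq_zero (Set.toFinite _)).mp h0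
      exact absurd (show q ∈ {q | A (some v') q} from hq)
        (by rw [hemp]; exact Set.notMem_empty q)
    have h1 : A (some u) (some v') := Duvp.resolve_right (hvout _)
    have h2 : A (some v) (some v') := Dvvp.resolve_right (hvout _)
    have h3 : A (some w') (some v') := Dvpwp.resolve_left (hvout _)
    have h3le : 3 ≤ inDeg A (some v') :=
      aux_three_le inSubVp h1 h2 h3 (sne nuv) (sne nuwp) (sne nvwp)
    rcases class2 v' hvpV with h | h <;> omega
  have tcv : (¬A (some u) (some v) ∧
        ¬((A (some s) (some u) ∧ ¬A (some u) (some v) ∧ A (some u) (some v')) ∨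
          (A (some s) (some u) ∧ A (some u) (some v) ∧ ¬A (some u) (some v')) ∨
          (¬A (some s) (some u) ∧ ¬A (some u) (some v) ∧ ¬A (some u) (some v'))))
      ∨ (A (some v) (some v') ∧
        ¬((A (some u) (some v') ∧ A (some v) (some v') ∧ A (some v') (some w')) ∨
          (A (some u) (some v') ∧ ¬A (some v) (some v') ∧ ¬A (some v') (some w')) ∨
          (¬A (some u) (some v') ∧ A (some v) (some v') ∧ ¬A (some v') (some w'))))
      ∨ (A (some v) (some w) ∧ ¬(A (some v) (some w) ∧ ¬A (some w) (some r))) := by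
    obtain ⟨c, hcA, hnret⟩ := htc (some v) (memO hvV) hnLv
    rcases outSubV c hcA with rfl | rfl | rfl
    · refine Or.inl ⟨Ruv.mp hcA, fun hE2 => hnret ?_⟩
      rcases hE2 with ⟨ha, hb, hc2⟩ | ⟨ha, hb, hc2⟩ | ⟨ha, hb, hc2⟩
      · exact aux_setOf_eq_pair inSubU ha (Ruv.mpr hb) (fun h => Ruvp.mp h hc2) (sne nsv)
      · exact aux_setOf_eq_pair (fun p hp => (inSubU p hp).imp_right Or.symm) ha
          (Ruvp.mpr hc2) (fun h => Ruv.mp h hb) (sne nsvp)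
      · exact aux_setOf_eq_pair
          (fun p hp => (inSubU p hp).elim (fun h => Or.inr (Or.inr h)) (fun h => h.imp_right Or.inl))
          (Ruv.mpr hb) (Ruvp.mpr hc2) ha (sne nvvp)
    · refine Or.inr (Or.inl ⟨hcA, fun hE2 => hnret ?_⟩)
      rcases hE2 with ⟨ha, hb, hc2⟩ | ⟨ha, hb, hc2⟩ | ⟨ha, hb, hc2⟩
      · exact aux_setOf_eq_pair inSubVp ha hb (fun h => Rvpwp.mp h hc2) (sne nuv)
      · exact aux_setOf_eq_pair (fun p hp => (inSubVp p hp).imp_right Or.symm) ha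
          (Rvpwp.mpr hc2) hb (sne nuwp)
      · exact aux_setOf_eq_pair
          (fun p hp => (inSubVp p hp).elim (fun h => Or.inr (Or.inr h)) (fun h => h.imp_right Or.inl))
          hb (Rvpwp.mpr hc2) ha (sne nvwp)
    · refine Or.inr (Or.inr ⟨hcA, fun hww => hnret ?_⟩)
      exact aux_setOf_eq_pair inSubW hww.1 (Rwr.mpr hww.2) hnlw (sne nvr)
  have tcvp : (¬A (some u) (some v') ∧
        ¬((A (some s) (some u) ∧ ¬A (some u) (some v) ∧ A (some u) (some v')) ∨
          (A (some s) (some u) ∧ A (some u) (some v) ∧ ¬A (some u) (some v')) ∨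
          (¬A (some s) (some u) ∧ ¬A (some u) (some v) ∧ ¬A (some u) (some v'))))
      ∨ (¬A (some v) (some v') ∧
        ¬((A (some u) (some v) ∧ ¬A (some v) (some v') ∧ A (some v) (some w)) ∨
          (A (some u) (some v) ∧ A (some v) (some v') ∧ ¬A (some v) (some w)) ∨
          (¬A (some u) (some v) ∧ ¬A (some v) (some v') ∧ ¬A (some v) (some w))))
      ∨ (A (some v') (some w') ∧ ¬(A (some v') (some w') ∧ ¬A (some w') (some r))) := by
    obtain ⟨c, hcA, hnret⟩ := htc (some v') (memO hvpV) hnLvp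
    rcases outSubVp c hcA with rfl | rfl | rfl
    · refine Or.inl ⟨Ruvp.mp hcA, fun hE2 => hnret ?_⟩
      rcases hE2 with ⟨ha, hb, hc2⟩ | ⟨ha, hb, hc2⟩ | ⟨ha, hb, hc2⟩
      · exact aux_setOf_eq_pair inSubU ha (Ruv.mpr hb) (fun h => Ruvp.mp h hc2) (sne nsv)
      · exact aux_setOf_eq_pair (fun p hp => (inSubU p hp).imp_right Or.symm) ha
          (Ruvp.mpr hc2) (fun h => Ruv.mp h hb) (sne nsvp)
      · exact aux_setOf_eq_pair
          (fun p hp => (inSubU p hp).elim (fun h => Or.inr (Or.inr h)) (fun h => h.imp_right Or.inl))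
          (Ruv.mpr hb) (Ruvp.mpr hc2) ha (sne nvvp)
    · refine Or.inr (Or.inl ⟨Rvvp.mp hcA, fun hE2 => hnret ?_⟩)
      rcases hE2 with ⟨ha, hb, hc2⟩ | ⟨ha, hb, hc2⟩ | ⟨ha, hb, hc2⟩
      · exact aux_setOf_eq_pair inSubV ha (Rvvp.mpr hb) (fun h => Rvw.mp h hc2) (sne nuvp)
      · exact aux_setOf_eq_pair (fun p hp => (inSubV p hp).imp_right Or.symm) ha
          (Rvw.mpr hc2) (fun h => Rvvp.mp h hb) (sne nuw)
      · exact aux_setOf_eq_pair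
          (fun p hp => (inSubV p hp).elim (fun h => Or.inr (Or.inr h)) (fun h => h.imp_right Or.inl))
          (Rvvp.mpr hb) (Rvw.mpr hc2) ha (sne nvpw)
    · refine Or.inr (Or.inr ⟨hcA, fun hww => hnret ?_⟩)
      exact aux_setOf_eq_pair inSubWp hww.1 (Rwpr.mpr hww.2) hnlpwp (sne nvpr)
  -- acyclicity constraints
  have tri1 : ¬(A (some u) (some v) ∧ A (some v) (some v') ∧ ¬A (some u) (some v')) := by
    rintro ⟨h1, h2, h3⟩
    exact hacyc (some u) (((Relation.TransGen.single h1).tail h2).tail (Ruvp.mpr h3))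
  have tri2 : ¬(¬A (some u) (some v) ∧ ¬A (some v) (some v') ∧ A (some u) (some v')) := by
    rintro ⟨h1, h2, h3⟩
    exact hacyc (some u) (((Relation.TransGen.single h3).tail (Rvvp.mpr h2)).tail
      (Ruv.mpr h1))
  have pen1 : ¬(A (some v) (some w) ∧ A (some w) (some r) ∧ ¬A (some w') (some r) ∧
      ¬A (some v') (some w') ∧ ¬A (some v) (some v')) := by
    rintro ⟨h1, h2, h3, h4, h5⟩
    exact hacyc (some v) (((((Relation.TransGen.single h1).tail h2).tail
      (Rwpr.mpr h3)).tail (Rvpwp.mpr h4)).tail (Rvvp.mpr h5))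
  have pen2 : ¬(¬A (some v) (some w) ∧ ¬A (some w) (some r) ∧ A (some w') (some r) ∧
      A (some v') (some w') ∧ A (some v) (some v')) := by
    rintro ⟨h1, h2, h3, h4, h5⟩
    exact hacyc (some v) (((((Relation.TransGen.single h5).tail h4).tail h3).tail
      (Rwr.mpr h2)).tail (Rvw.mpr h1))
  exact gadget_key (A (some s) (some u)) (A (some u) (some v)) (A (some u) (some v'))
    (A (some v) (some v')) (A (some v) (some w)) (A (some v') (some w'))
    (A (some w) (some r)) (A (some w') (some r)) (A (some r) (some t))
    hu1 hu2 hv1 hv2 hvp1 hvp2 hw2 hwp2 hr1 hr2 tcv tcvp tri1 tri2 pen1 pen2
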